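/- Let p_{i-1}/q_i be the birth/death ratios of the V-scaled one-species mass-action birth-death chain, i.e., p_{i-1} = Σ_{n≥0} (κ_n/V^{|ν_n|−1})(i−1)(i−2)···(i−|ν_n|), q_i = Σ_{n<0} (κ_n/V^{|ν_n|−1}) i(i−1)···(i−|ν_n|+1). If x̃^V ∈ (1/V)ℤ_{≥0} with x̃^V → x̃ ∈ (0,∞), then −(1/V) Σ_{i=i₀+1}^{V x̃^V} [ln p_{i−1} − ln q_i] → −∫₀^{x̃} ln( (Σ_{n≥0} κ_n u^{ν_n}) / (Σ_{n<0} κ_n u^{ν_n}) ) du as V → ∞. -/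

import Mathlib

open Filter Real

section Stmt9Prelims
open MeasureTheory Set
namespace Stmt9Aux

lemma log_int01 : IntervalIntegrable Real.log volume 0 1 := by
  rw [intervalIntegrable_iff_integrableOn_Ioc_of_le zero_le_one]
  have hg : IntegrableOn (fun x : ℝ => 2 * x ^ (-(1:ℝ)/2)) (Set.Ioc 0 1) volume := by
    have h := (intervalIntegral.intervalIntegrable_rpow' (a := 0) (b := 1) (r := -(1:ℝ)/2) (by norm_num))
    rw [intervalIntegrable_iff_integrableOn_Ioc_of_le zero_le_one] at h
    exact h.const_mul 2
  refine MeasureTheory.Integrable.mono hg Real.measurable_log.aestronglyMeasurable ?_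
  refine (ae_restrict_iff' measurableSet_Ioc).2 (ae_of_all _ fun x hx => ?_)
  have hx0 : (0:ℝ) < x := hx.1
  have hx1 : x ≤ 1 := hx.2
  have hrp : (0:ℝ) < x ^ (-(1:ℝ)/2) := Real.rpow_pos_of_pos hx0 _
  rw [Real.norm_eq_abs, Real.norm_eq_abs, abs_of_nonpos (Real.log_nonpos hx0.le hx1),
    abs_of_nonneg (by positivity)]
  have h2 : -Real.log x = 2 * Real.log (x ^ (-(1:ℝ)/2)) := by
    rw [Real.log_rpow hx0]; ring
  have h3 : Real.log (x ^ (-(1:ℝ)/2)) ≤ x ^ (-(1:ℝ)/2) - 1 :=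
    Real.log_le_sub_one_of_pos hrp
  rw [h2]
  linarith

lemma log_int {B : ℝ} (hB : 0 ≤ B) : IntervalIntegrable Real.log volume 0 B := by
  rcases le_total B 1 with h | h
  · refine log_int01.mono_set ?_
    rw [Set.uIcc_of_le zero_le_one, Set.uIcc_of_le hB]
    exact Set.Icc_subset_Icc le_rfl h
  · exact log_int01.trans (intervalIntegral.intervalIntegrable_log (by
      rw [Set.uIcc_of_le h]; rintro ⟨h0, -⟩; norm_num at h0))

lemma sum_pow_pos (F : Finset ℕ) (hF : F.Nonempty) (κ : ℕ → ℝ) (hκ : ∀ n ∈ F, 0 < κ n)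
    {u : ℝ} (hu : 0 < u) : 0 < ∑ n ∈ F, κ n * u ^ n :=
  Finset.sum_pos (fun n hn => mul_pos (hκ n hn) (pow_pos hu n)) hF

lemma log_sum_pow_integrable (F : Finset ℕ) (hF : F.Nonempty) (κ : ℕ → ℝ)
    (hκ : ∀ n ∈ F, 0 < κ n) {B : ℝ} (hB : 0 < B) :
    IntervalIntegrable (fun u => Real.log (∑ n ∈ F, κ n * u ^ n)) volume 0 B := by
  set e := F.min' hF with he
  set S : ℝ → ℝ := fun u => ∑ n ∈ F, κ n * u ^ (n - e) with hS
  have hSc : Continuous S := by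
    apply continuous_finset_sum
    intro n _
    exact continuous_const.mul (continuous_pow _)
  have hSpos : ∀ u : ℝ, 0 ≤ u → 0 < S u := by
    intro u hu
    refine Finset.sum_pos' (fun n hn => mul_nonneg (hκ n hn).le (pow_nonneg hu _)) ?_
    refine ⟨e, F.min'_mem hF, ?_⟩
    simp only [Nat.sub_self, pow_zero, mul_one]
    exact hκ e (F.min'_mem hF)
  have hg : IntervalIntegrable (fun u => (e:ℝ) * Real.log u + Real.log (S u)) volume 0 B := by
    refine ((log_int hB.le).const_mul _).add ?_
    refine ContinuousOn.intervalIntegrable ?_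
    refine ContinuousOn.log hSc.continuousOn ?_
    intro u hu
    rw [Set.uIcc_of_le hB.le] at hu
    exact (hSpos u hu.1).ne'
  rw [intervalIntegrable_iff_integrableOn_Ioc_of_le hB.le] at hg ⊢
  refine hg.congr_fun ?_ measurableSet_Ioc
  intro u hu
  have hu0 : 0 < u := hu.1
  show (e:ℝ) * Real.log u + Real.log (S u) = Real.log (∑ n ∈ F, κ n * u ^ n)
  have hfac : (∑ n ∈ F, κ n * u ^ n) = u ^ e * S u := by
    rw [hS, Finset.mul_sum]
    refine Finset.sum_congr rfl fun n hn => ?_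
    rw [mul_left_comm, ← pow_add, Nat.add_sub_cancel' (F.min'_le n hn)]
  rw [hfac, Real.log_mul (pow_ne_zero _ hu0.ne') (hSpos u hu0.le).ne', Real.log_pow]



lemma const_mul_le_integral {f : ℝ → ℝ} {c d : ℝ} (hcd : c ≤ d)
    (hint : IntervalIntegrable f volume c d)
    (h : ∀ x ∈ Set.Ioc c d, f c ≤ f x) :
    (d - c) * f c ≤ ∫ u in c..d, f u := by
  rw [intervalIntegral.integral_of_le hcd]
  have h0 : ∫ _x in Set.Ioc c d, f c ∂volume ≤ ∫ x in Set.Ioc c d, f x ∂volume :=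
    setIntegral_mono_on (integrableOn_const measure_Ioc_lt_top.ne)
      ((intervalIntegrable_iff_integrableOn_Ioc_of_le hcd).1 hint) measurableSet_Ioc h
  rwa [setIntegral_const, Real.volume_real_Ioc_of_le hcd,
    smul_eq_mul] at h0

lemma integral_le_const_mul {f : ℝ → ℝ} {c d : ℝ} (hcd : c ≤ d)
    (hint : IntervalIntegrable f volume c d)
    (h : ∀ x ∈ Set.Ioc c d, f x ≤ f d) :
    (∫ u in c..d, f u) ≤ (d - c) * f d := by
  rw [intervalIntegral.integral_of_le hcd]
  have h0 : ∫ x in Set.Ioc c d, f x ∂volume ≤ ∫ _x in Set.Ioc c d, f d ∂volume :=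
    setIntegral_mono_on ((intervalIntegrable_iff_integrableOn_Ioc_of_le hcd).1 hint)
      (integrableOn_const measure_Ioc_lt_top.ne) measurableSet_Ioc h
  rwa [setIntegral_const, Real.volume_real_Ioc_of_le hcd,
    smul_eq_mul] at h0

lemma cast_atTop {V : ℕ → ℝ} (hV : Tendsto V atTop atTop)
    {b : ℕ → ℕ} {xt : ℝ} (hxt : 0 < xt)
    (hb : Tendsto (fun m => (b m : ℝ) / V m) atTop (nhds xt)) :
    Tendsto (fun m => (b m : ℝ)) atTop atTop := by
  have h := Filter.Tendsto.pos_mul_atTop hxt hb hV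
  have hV0 : ∀ᶠ m in atTop, V m ≠ 0 :=
    (hV.eventually_ge_atTop 1).mono fun m hm => by linarith
  refine Tendsto.congr' ?_ h
  filter_upwards [hV0] with m hm
  field_simp

lemma riemann_mono (f : ℝ → ℝ) (xt : ℝ) (hxt : 0 < xt)
    (hmono : ∀ u v : ℝ, 0 < u → u ≤ v → f u ≤ f v)
    (hint : IntervalIntegrable f volume 0 (xt + 1))
    (a : ℕ) (ha : 1 ≤ a)
    (V : ℕ → ℝ) (hV : Tendsto V atTop atTop) (hVpos : ∀ m, 0 < V m)
    (b : ℕ → ℕ) (hb : Tendsto (fun m => (b m : ℝ) / V m) atTop (nhds xt)) :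
    Tendsto (fun m => (1 / V m) * ∑ i ∈ Finset.Icc a (b m), f ((i : ℝ) / V m))
      atTop (nhds (∫ u in (0:ℝ)..xt, f u)) := by
  have hB : 0 < xt + 1 := by linarith
  set B := xt + 1 with hBdef
  have hsub : ∀ c d : ℝ, 0 ≤ c → c ≤ B → 0 ≤ d → d ≤ B → IntervalIntegrable f volume c d := by
    intro c d hc hcB hd hdB
    refine hint.mono_set (Set.uIcc_subset_uIcc ?_ ?_) <;>
      rw [Set.uIcc_of_le hB.le] <;> exact ⟨by assumption, by assumption⟩
  set F : ℝ → ℝ := fun t => ∫ u in (0:ℝ)..t, f u with hFdef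
  have hF0 : F 0 = 0 := intervalIntegral.integral_same
  have hFcont : ContinuousOn F (Set.Icc 0 B) := by
    have h1 : IntegrableOn f (Set.uIcc 0 B) volume := by
      rw [Set.uIcc_of_le hB.le, integrableOn_Icc_iff_integrableOn_Ioc]
      exact (intervalIntegrable_iff_integrableOn_Ioc_of_le hB.le).1 hint
    have h2 := intervalIntegral.continuousOn_primitive_interval h1
    rwa [Set.uIcc_of_le hB.le] at h2
  have hFsub : ∀ c d : ℝ, 0 ≤ c → c ≤ B → 0 ≤ d → d ≤ B →
      (∫ u in c..d, f u) = F d - F c := by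
    intro c d hc hcB hd hdB
    exact (intervalIntegral.integral_interval_sub_left
      (hsub 0 d le_rfl hB.le hd hdB) (hsub 0 c le_rfl hB.le hc hcB)).symm
  have hV2 : ∀ᶠ m in atTop, 2 ≤ V m := hV.eventually_ge_atTop 2
  have hbtop : Tendsto (fun m => (b m : ℝ)) atTop atTop := cast_atTop hV hxt hb
  have hba : ∀ᶠ m in atTop, a ≤ b m :=
    (hbtop.eventually_ge_atTop (a : ℝ)).mono fun m hm => by exact_mod_cast hm
  have hbB : ∀ᶠ m in atTop, (b m : ℝ) / V m ≤ xt + 1/2 :=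
    (hb.eventually_lt_const (by linarith)).mono fun m hm => hm.le
  have hmain : ∀ᶠ m in atTop,
      F ((b m : ℝ) / V m) - F (((a:ℝ) - 1) / V m)
        ≤ (1 / V m) * ∑ i ∈ Finset.Icc a (b m), f ((i : ℝ) / V m)
      ∧ (1 / V m) * ∑ i ∈ Finset.Icc a (b m), f ((i : ℝ) / V m)
        ≤ F (((b m : ℝ) + 1) / V m) - F ((a:ℝ) / V m) := by
    filter_upwards [hV2, hba, hbB] with m hv2 hab hbb
    have hv0 : (0:ℝ) < V m := hVpos m
    set N := b m + 1 - a with hN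
    have haN : a + N = b m + 1 := by omega
    have hhalf : 1 / V m ≤ 1 / 2 := by
      rw [div_le_div_iff₀ hv0 (by norm_num)]; linarith
    have hcastB : ∀ k : ℕ, k ≤ N → ((a + k : ℕ) : ℝ) / V m ≤ B := by
      intro k hk
      have h1 : ((a + k : ℕ) : ℝ) ≤ (b m : ℝ) + 1 := by
        have h2 : a + k ≤ b m + 1 := by omega
        exact_mod_cast h2
      have h3 : ((a + k : ℕ) : ℝ) / V m ≤ ((b m : ℝ) + 1) / V m := by gcongr
      have h4 : ((b m : ℝ) + 1) / V m = (b m : ℝ) / V m + 1 / V m := by ring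
      calc ((a + k : ℕ) : ℝ) / V m ≤ ((b m : ℝ) + 1) / V m := h3
        _ ≤ xt + 1/2 + 1/2 := by rw [h4]; exact add_le_add hbb hhalf
        _ = B := by rw [hBdef]; ring
    have hone : ∀ k : ℕ, (1:ℝ) ≤ ((a + k : ℕ) : ℝ) := by
      intro k
      have h5 : (1:ℕ) ≤ a + k := le_trans ha (Nat.le_add_right a k)
      exact_mod_cast h5
    have hcast1 : ∀ k : ℕ, ((a + (k+1) : ℕ) : ℝ) = ((a + k : ℕ) : ℝ) + 1 := by
      intro k; push_cast; ring
    have hsum : ∑ i ∈ Finset.Icc a (b m), f ((i : ℝ) / V m)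
        = ∑ k ∈ Finset.range N, f (((a + k : ℕ) : ℝ) / V m) := by
      rw [← Finset.Ico_add_one_right_eq_Icc, Finset.sum_Ico_eq_sum_range]
    constructor
    · -- lower bound
      set ψ : ℕ → ℝ := fun k => (((a + k : ℕ) : ℝ) - 1) / V m with hψ
      have hψ0 : ∀ k : ℕ, 0 ≤ ψ k := fun k =>
        div_nonneg (by linarith [hone k]) hv0.le
      have hψle : ∀ k : ℕ, ψ k ≤ ((a + k : ℕ) : ℝ) / V m := by
        intro k
        show (((a + k : ℕ) : ℝ) - 1) / V m ≤ ((a + k : ℕ) : ℝ) / V m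
        gcongr
        linarith
      have hψB : ∀ k : ℕ, k ≤ N → ψ k ≤ B := fun k hk => (hψle k).trans (hcastB k hk)
      have hψsucc : ∀ k : ℕ, ψ (k+1) = ((a + k : ℕ) : ℝ) / V m := by
        intro k
        show (((a + (k+1) : ℕ) : ℝ) - 1) / V m = ((a + k : ℕ) : ℝ) / V m
        rw [hcast1]; ring_nf
      have hψmono : ∀ k : ℕ, ψ k ≤ ψ (k+1) := by
        intro k; rw [hψsucc k]; exact hψle k
      have hintk : ∀ k : ℕ, k < N → IntervalIntegrable f volume (ψ k) (ψ (k+1)) := by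
        intro k hk
        exact hsub _ _ (hψ0 k) (hψB k hk.le) (hψ0 (k+1)) (hψB (k+1) hk)
      have hstep : ∀ k ∈ Finset.range N,
          (∫ u in ψ k..ψ (k+1), f u) ≤ (1 / V m) * f (((a + k:ℕ):ℝ) / V m) := by
        intro k hk
        rw [Finset.mem_range] at hk
        have h1 := integral_le_const_mul (hψmono k) (hintk k hk) (fun x hx => by
          rw [hψsucc k]
          refine hmono x _ (lt_of_le_of_lt (hψ0 k) hx.1) ?_
          rw [← hψsucc k]; exact hx.2)
        have hgap : ψ (k+1) - ψ k = 1 / V m := by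
          rw [hψsucc k]
          show ((a + k : ℕ) : ℝ) / V m - (((a + k : ℕ) : ℝ) - 1) / V m = 1 / V m
          field_simp
          ring
        calc (∫ u in ψ k..ψ (k+1), f u) ≤ (ψ (k+1) - ψ k) * f (ψ (k+1)) := h1
          _ = (1 / V m) * f (((a + k:ℕ):ℝ) / V m) := by rw [hgap, hψsucc k]
      have hteles : ∑ k ∈ Finset.range N, ∫ u in ψ k..ψ (k+1), f u
          = ∫ u in (ψ 0)..(ψ N), f u :=
        intervalIntegral.sum_integral_adjacent_intervals hintk
      have hψ0eq : ψ 0 = ((a:ℝ) - 1) / V m := by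
        show (((a + 0 : ℕ) : ℝ) - 1) / V m = _
        norm_num
      have hψNeq : ψ N = (b m : ℝ) / V m := by
        show (((a + N : ℕ) : ℝ) - 1) / V m = _
        rw [haN]; push_cast; ring_nf
      calc F ((b m:ℝ)/V m) - F (((a:ℝ)-1)/V m) = F (ψ N) - F (ψ 0) := by
            rw [hψ0eq, hψNeq]
        _ = ∫ u in (ψ 0)..(ψ N), f u :=
            (hFsub (ψ 0) (ψ N) (hψ0 0) (hψB 0 (Nat.zero_le N)) (hψ0 N) (hψB N le_rfl)).symm
        _ = ∑ k ∈ Finset.range N, ∫ u in ψ k..ψ (k+1), f u := hteles.symm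
        _ ≤ ∑ k ∈ Finset.range N, (1/V m) * f (((a+k:ℕ):ℝ)/V m) := Finset.sum_le_sum hstep
        _ = (1/V m) * ∑ k ∈ Finset.range N, f (((a+k:ℕ):ℝ)/V m) := (Finset.mul_sum _ _ _).symm
        _ = (1/V m) * ∑ i ∈ Finset.Icc a (b m), f ((i:ℝ)/V m) := by rw [hsum]
    · -- upper bound
      set φ : ℕ → ℝ := fun k => ((a + k : ℕ) : ℝ) / V m with hφ
      have hφpos : ∀ k : ℕ, 0 < φ k := fun k =>
        div_pos (by linarith [hone k]) hv0
      have hφsucc : ∀ k : ℕ, φ (k+1) = (((a + k : ℕ) : ℝ) + 1) / V m := by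
        intro k
        show ((a + (k+1) : ℕ) : ℝ) / V m = _
        rw [hcast1]
      have hφmono : ∀ k : ℕ, φ k ≤ φ (k+1) := by
        intro k
        rw [hφsucc k]
        show ((a + k : ℕ) : ℝ) / V m ≤ (((a + k : ℕ) : ℝ) + 1) / V m
        gcongr
        linarith
      have hintk : ∀ k : ℕ, k < N → IntervalIntegrable f volume (φ k) (φ (k+1)) := by
        intro k hk
        exact hsub _ _ (hφpos k).le (hcastB k hk.le) (hφpos (k+1)).le (hcastB (k+1) hk)
      have hstep : ∀ k ∈ Finset.range N,
          (1 / V m) * f (((a + k:ℕ):ℝ) / V m) ≤ ∫ u in φ k..φ (k+1), f u := by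
        intro k hk
        rw [Finset.mem_range] at hk
        have h1 := const_mul_le_integral (hφmono k) (hintk k hk)
          (fun x hx => hmono _ x (hφpos k) hx.1.le)
        have hgap : φ (k+1) - φ k = 1 / V m := by
          rw [hφsucc k]
          show (((a + k : ℕ) : ℝ) + 1) / V m - ((a + k : ℕ) : ℝ) / V m = 1 / V m
          field_simp
          ring
        rwa [hgap] at h1
      have hteles : ∑ k ∈ Finset.range N, ∫ u in φ k..φ (k+1), f u
          = ∫ u in (φ 0)..(φ N), f u :=
        intervalIntegral.sum_integral_adjacent_intervals hintk
      have hφ0eq : φ 0 = (a:ℝ) / V m := by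
        show ((a + 0 : ℕ) : ℝ) / V m = _
        norm_num
      have hφNeq : φ N = ((b m : ℝ) + 1) / V m := by
        show ((a + N : ℕ) : ℝ) / V m = _
        rw [haN]; push_cast; ring_nf
      calc (1/V m) * ∑ i ∈ Finset.Icc a (b m), f ((i:ℝ)/V m)
          = (1/V m) * ∑ k ∈ Finset.range N, f (((a+k:ℕ):ℝ)/V m) := by rw [hsum]
        _ = ∑ k ∈ Finset.range N, (1/V m) * f (((a+k:ℕ):ℝ)/V m) := Finset.mul_sum _ _ _
        _ ≤ ∑ k ∈ Finset.range N, ∫ u in φ k..φ (k+1), f u := Finset.sum_le_sum hstep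
        _ = ∫ u in (φ 0)..(φ N), f u := hteles
        _ = F (φ N) - F (φ 0) :=
            hFsub (φ 0) (φ N) (hφpos 0).le (hcastB 0 (Nat.zero_le N)) (hφpos N).le (hcastB N le_rfl)
        _ = F (((b m : ℝ) + 1) / V m) - F ((a:ℝ) / V m) := by rw [hφ0eq, hφNeq]
  -- endpoint convergence
  have hcdiv : ∀ c : ℝ, Tendsto (fun m => c / V m) atTop (nhds 0) :=
    fun c => Tendsto.div_atTop tendsto_const_nhds hV
  have hFtend : ∀ (g : ℕ → ℝ) (L : ℝ), L ∈ Set.Icc (0:ℝ) B → Tendsto g atTop (nhds L) →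
      (∀ᶠ m in atTop, g m ∈ Set.Icc (0:ℝ) B) →
      Tendsto (fun m => F (g m)) atTop (nhds (F L)) := by
    intro g L hL hg hgB
    exact (ContinuousWithinAt.tendsto (hFcont L hL)).comp
      (tendsto_nhdsWithin_of_tendsto_nhds_of_eventually_within g hg hgB)
  have hm1 : ∀ᶠ m in atTop, (b m : ℝ) / V m ∈ Set.Icc (0:ℝ) B := by
    filter_upwards [hbB] with m hm
    exact ⟨div_nonneg (Nat.cast_nonneg _) (hVpos m).le, by rw [hBdef]; linarith⟩
  have hm2 : ∀ᶠ m in atTop, ((a:ℝ) - 1) / V m ∈ Set.Icc (0:ℝ) B := by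
    have ha1 : (1:ℝ) ≤ (a:ℝ) := by exact_mod_cast ha
    filter_upwards [((hcdiv ((a:ℝ)-1)).eventually_lt_const hB)] with m hm
    exact ⟨div_nonneg (by linarith) (hVpos m).le, hm.le⟩
  have hm3 : ∀ᶠ m in atTop, ((b m : ℝ) + 1) / V m ∈ Set.Icc (0:ℝ) B := by
    filter_upwards [hbB, hV2] with m hm hv2
    have hv0 : (0:ℝ) < V m := hVpos m
    have hhalf : 1 / V m ≤ 1 / 2 := by
      rw [div_le_div_iff₀ hv0 (by norm_num)]; linarith
    refine ⟨div_nonneg (by positivity) hv0.le, ?_⟩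
    have h4 : ((b m : ℝ) + 1) / V m = (b m : ℝ) / V m + 1 / V m := by ring
    rw [h4, hBdef]; linarith
  have hm4 : ∀ᶠ m in atTop, (a:ℝ) / V m ∈ Set.Icc (0:ℝ) B := by
    filter_upwards [((hcdiv (a:ℝ)).eventually_lt_const hB)] with m hm
    exact ⟨div_nonneg (Nat.cast_nonneg _) (hVpos m).le, hm.le⟩
  have hup1 : Tendsto (fun m => ((b m : ℝ) + 1) / V m) atTop (nhds xt) := by
    have h := hb.add (hcdiv 1)
    rw [add_zero] at h
    refine h.congr fun m => ?_
    rw [← add_div]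
  have t1 := hFtend _ xt ⟨hxt.le, by rw [hBdef]; linarith⟩ hb hm1
  have t2 := hFtend _ 0 ⟨le_rfl, hB.le⟩ (hcdiv ((a:ℝ)-1)) hm2
  have t3 := hFtend _ xt ⟨hxt.le, by rw [hBdef]; linarith⟩ hup1 hm3
  have t4 := hFtend _ 0 ⟨le_rfl, hB.le⟩ (hcdiv (a:ℝ)) hm4
  have hlow : Tendsto (fun m => F ((b m:ℝ)/V m) - F (((a:ℝ)-1)/V m)) atTop (nhds (F xt)) := by
    have h := t1.sub t2; rwa [hF0, sub_zero] at h
  have hup : Tendsto (fun m => F (((b m:ℝ)+1)/V m) - F ((a:ℝ)/V m)) atTop (nhds (F xt)) := by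
    have h := t3.sub t4; rwa [hF0, sub_zero] at h
  exact tendsto_of_tendsto_of_tendsto_of_le_of_le' hlow hup
    (hmain.mono fun m h => h.1) (hmain.mono fun m h => h.2)


end Stmt9Aux
namespace Stmt9Aux2
open Stmt9Aux

-- rate of (C + c * log t)/t → 0
lemma log_div_tendsto (C c : ℝ) {V : ℕ → ℝ} (hV : Tendsto V atTop atTop) :
    Tendsto (fun m => (C + c * Real.log (V m)) / V m) atTop (nhds 0) := by
  have h1 : Tendsto (fun t : ℝ => Real.log t / t) atTop (nhds 0) :=
    Real.isLittleO_log_id_atTop.tendsto_div_nhds_zero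
  have h2 : Tendsto (fun t : ℝ => C * t⁻¹ + c * (Real.log t / t)) atTop (nhds 0) := by
    have := (tendsto_inv_atTop_zero.const_mul C).add (h1.const_mul c)
    simpa using this
  have h3 : Tendsto (fun t : ℝ => (C + c * Real.log t) / t) atTop (nhds 0) := by
    refine h2.congr fun t => ?_
    rcases eq_or_ne t 0 with rfl | ht
    · simp
    · field_simp
  exact h3.comp hV

lemma edge (F : Finset ℕ) (hF : F.Nonempty) (κ : ℕ → ℝ) (hκ : ∀ n ∈ F, 0 < κ n) (j : ℕ)
    (V : ℕ → ℝ) (hV : Tendsto V atTop atTop) (hVpos : ∀ m, 0 < V m) :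
    Tendsto (fun m =>
        Real.log (∑ n ∈ F, κ n / V m ^ ((n:ℤ) - 1) * (Nat.descFactorial j n : ℝ)) / V m)
      atTop (nhds 0) := by
  set K : ℕ := F.sup id with hK
  have hKF : ∀ n ∈ F, n ≤ K := fun n hn => Finset.le_sup (f := id) hn
  obtain ⟨c, hcmem, hcmin⟩ : ∃ c, c ∈ F.image κ ∧ ∀ n ∈ F, c ≤ κ n := by
    refine ⟨(F.image κ).min' (hF.image κ), (F.image κ).min'_mem _, fun n hn => ?_⟩
    exact Finset.min'_le _ _ (Finset.mem_image_of_mem κ hn)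
  obtain ⟨n₁, hn₁, rfl⟩ := Finset.mem_image.1 hcmem
  set c := κ n₁ with hc
  have hc0 : 0 < c := hκ n₁ hn₁
  set Cmax : ℝ := ∑ n ∈ F, κ n * (Nat.descFactorial j n : ℝ) with hCmax
  set C : ℝ := |Real.log c| + |Real.log Cmax| with hCdef
  have hC0 : 0 ≤ C := by rw [hCdef]; positivity
  have key : ∀ᶠ m in atTop, |Real.log (∑ n ∈ F, κ n / V m ^ ((n:ℤ) - 1)
      * (Nat.descFactorial j n : ℝ)) / V m|
      ≤ (C + ((K:ℝ)+1) * Real.log (V m)) / V m := by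
    filter_upwards [hV.eventually_ge_atTop 1] with m hv1
    have hv0 : (0:ℝ) < V m := hVpos m
    have hlogV : 0 ≤ Real.log (V m) := Real.log_nonneg hv1
    set s : ℝ := ∑ n ∈ F, κ n / V m ^ ((n:ℤ) - 1) * (Nat.descFactorial j n : ℝ) with hs
    have habs : |Real.log s| ≤ C + ((K:ℝ)+1) * Real.log (V m) := by
      rcases eq_or_ne s 0 with hs0 | hs0
      · rw [hs0, Real.log_zero, abs_zero]
        exact add_nonneg hC0 (mul_nonneg (by positivity) hlogV)
      · -- there is a nonzero term
        obtain ⟨n₀, hn₀, hterm⟩ := Finset.exists_ne_zero_of_sum_ne_zero hs0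
        have hd₀ : (1:ℝ) ≤ (Nat.descFactorial j n₀ : ℝ) := by
          have : Nat.descFactorial j n₀ ≠ 0 := by
            intro h; rw [h] at hterm; simp at hterm
          have h1 : 1 ≤ Nat.descFactorial j n₀ := Nat.one_le_iff_ne_zero.2 this
          exact_mod_cast h1
        have hterm_nonneg : ∀ n ∈ F, 0 ≤ κ n / V m ^ ((n:ℤ) - 1) * (Nat.descFactorial j n : ℝ) := by
          intro n hn
          exact mul_nonneg (div_nonneg (hκ n hn).le (zpow_pos hv0 _).le) (Nat.cast_nonneg _)
        -- lower bound on s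
        have hzlow : c * V m ^ ((1:ℤ) - (K:ℤ)) ≤ s := by
          have h1 : c * V m ^ ((1:ℤ) - (K:ℤ))
              ≤ κ n₀ / V m ^ ((n₀:ℤ) - 1) * (Nat.descFactorial j n₀ : ℝ) := by
            have h2 : V m ^ ((1:ℤ) - (K:ℤ)) ≤ V m ^ ((1:ℤ) - (n₀:ℤ)) := by
              apply zpow_le_zpow_right₀ hv1
              have := hKF n₀ hn₀
              omega
            have h3 : V m ^ ((1:ℤ) - (n₀:ℤ)) = (V m ^ ((n₀:ℤ) - 1))⁻¹ := by
              rw [← zpow_neg]; ring_nf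
            calc c * V m ^ ((1:ℤ) - (K:ℤ)) ≤ κ n₀ * V m ^ ((1:ℤ) - (n₀:ℤ)) := by
                  apply mul_le_mul (hcmin n₀ hn₀) h2 (zpow_pos hv0 _).le (hκ n₀ hn₀).le
              _ = κ n₀ / V m ^ ((n₀:ℤ) - 1) := by rw [h3, div_eq_mul_inv]
              _ ≤ κ n₀ / V m ^ ((n₀:ℤ) - 1) * (Nat.descFactorial j n₀ : ℝ) := by
                  nth_rewrite 1 [← mul_one (κ n₀ / V m ^ ((n₀:ℤ) - 1))]
                  exact mul_le_mul_of_nonneg_left hd₀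
                    (div_nonneg (hκ n₀ hn₀).le (zpow_pos hv0 _).le)
          exact h1.trans (Finset.single_le_sum hterm_nonneg hn₀)
        have hspos : 0 < s := lt_of_lt_of_le (mul_pos hc0 (zpow_pos hv0 _)) hzlow
        -- upper bound on s
        have hzup : s ≤ V m * Cmax := by
          rw [hCmax, Finset.mul_sum]
          apply Finset.sum_le_sum
          intro n hn
          have h3 : κ n / V m ^ ((n:ℤ) - 1) = κ n * V m ^ ((1:ℤ) - (n:ℤ)) := by
            rw [div_eq_mul_inv, ← zpow_neg]; ring_nf
          rw [h3]
          calc κ n * V m ^ ((1:ℤ) - (n:ℤ)) * (Nat.descFactorial j n : ℝ)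
              ≤ κ n * V m * (Nat.descFactorial j n : ℝ) := by
                apply mul_le_mul_of_nonneg_right ?_ (Nat.cast_nonneg _)
                apply mul_le_mul_of_nonneg_left ?_ (hκ n hn).le
                calc V m ^ ((1:ℤ) - (n:ℤ)) ≤ V m ^ (1:ℤ) := by
                      apply zpow_le_zpow_right₀ hv1; omega
                  _ = V m := zpow_one _
            _ = V m * (κ n * (Nat.descFactorial j n : ℝ)) := by ring
        have hCmaxpos : 0 < Cmax := by
          by_contra h
          push_neg at h
          have : V m * Cmax ≤ 0 := mul_nonpos_of_nonneg_of_nonpos hv0.le h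
          linarith
        rw [abs_le]
        constructor
        · have h1 : Real.log (c * V m ^ ((1:ℤ) - (K:ℤ))) ≤ Real.log s :=
            Real.log_le_log (by positivity) hzlow
          rw [Real.log_mul hc0.ne' (zpow_pos hv0 _).ne', Real.log_zpow] at h1
          have h2 : -(C + ((K:ℝ)+1) * Real.log (V m))
              ≤ Real.log c + ((1:ℤ) - (K:ℤ) : ℤ) * Real.log (V m) := by
            push_cast
            have habs1 : -|Real.log c| ≤ Real.log c := neg_abs_le _
            have hKr : (0:ℝ) ≤ (K:ℝ) := Nat.cast_nonneg _
            have : -(((K:ℝ)+1) * Real.log (V m)) ≤ (1 - (K:ℝ)) * Real.log (V m) := by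
              nlinarith
            have h4 : (0:ℝ) ≤ |Real.log Cmax| := abs_nonneg _
            rw [hCdef]
            nlinarith
          linarith
        · have h1 : Real.log s ≤ Real.log (V m * Cmax) :=
            Real.log_le_log hspos hzup
          rw [Real.log_mul hv0.ne' hCmaxpos.ne'] at h1
          have h2 : Real.log Cmax ≤ |Real.log Cmax| := le_abs_self _
          have h3 : Real.log (V m) ≤ ((K:ℝ)+1) * Real.log (V m) := by
            nlinarith [Nat.cast_nonneg (α := ℝ) K]
          have h4 : (0:ℝ) ≤ |Real.log c| := abs_nonneg _
          rw [hCdef]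
          linarith
    rw [abs_div, abs_of_pos hv0]
    exact (div_le_div_iff_of_pos_right hv0).2 habs
  exact squeeze_zero_norm' key (log_div_tendsto C ((K:ℝ)+1) hV)


end Stmt9Aux2
namespace Stmt9Aux3

lemma dF_low_p {i K n : ℕ} (hn : n ≤ K) (hKi : K + 1 ≤ i) :
    (i - K) ^ n ≤ Nat.descFactorial (i - 1) n := by
  calc (i - K) ^ n ≤ (i - n) ^ n := Nat.pow_le_pow_left (Nat.sub_le_sub_left hn i) n
    _ = ((i - 1) + 1 - n) ^ n := by
        congr 1
        omega
    _ ≤ Nat.descFactorial (i - 1) n := Nat.pow_sub_le_descFactorial _ _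

lemma dF_low_q {i K n : ℕ} (hn : n ≤ K) :
    (i - K) ^ n ≤ Nat.descFactorial i n := by
  calc (i - K) ^ n ≤ (i + 1 - n) ^ n := Nat.pow_le_pow_left (by omega) n
    _ ≤ Nat.descFactorial i n := Nat.pow_sub_le_descFactorial _ _

lemma dF_up_p (i n : ℕ) : Nat.descFactorial (i - 1) n ≤ i ^ n :=
  (Nat.descFactorial_le_pow _ _).trans (Nat.pow_le_pow_left (Nat.sub_le i 1) n)

lemma dF_up_q (i n : ℕ) : Nat.descFactorial i n ≤ i ^ n :=
  Nat.descFactorial_le_pow _ _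

lemma term_eq {Vm : ℝ} (hVm : 0 < Vm) (κn : ℝ) (n : ℕ) (y : ℝ) :
    Vm * (κn * (y / Vm) ^ n) = κn / Vm ^ ((n:ℤ) - 1) * y ^ n := by
  rw [div_pow, zpow_sub₀ hVm.ne', zpow_one, zpow_natCast]
  field_simp

lemma sum_bounds (F : Finset ℕ) (κ : ℕ → ℝ) (hκ : ∀ n ∈ F, 0 < κ n)
    {Vm : ℝ} (hVm : 0 < Vm) (c i j : ℕ)
    (hlow : ∀ n ∈ F, c ^ n ≤ Nat.descFactorial j n)
    (hup : ∀ n ∈ F, Nat.descFactorial j n ≤ i ^ n) :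
    Vm * ∑ n ∈ F, κ n * ((c:ℝ) / Vm) ^ n
      ≤ ∑ n ∈ F, κ n / Vm ^ ((n:ℤ) - 1) * (Nat.descFactorial j n : ℝ)
    ∧ ∑ n ∈ F, κ n / Vm ^ ((n:ℤ) - 1) * (Nat.descFactorial j n : ℝ)
      ≤ Vm * ∑ n ∈ F, κ n * ((i:ℝ) / Vm) ^ n := by
  constructor
  · rw [Finset.mul_sum]
    apply Finset.sum_le_sum
    intro n hn
    rw [term_eq hVm]
    apply mul_le_mul_of_nonneg_left ?_ (div_nonneg (hκ n hn).le (zpow_pos hVm _).le)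
    have h := hlow n hn
    calc ((c:ℝ)) ^ n = ((c ^ n : ℕ) : ℝ) := by push_cast; ring
      _ ≤ (Nat.descFactorial j n : ℝ) := by exact_mod_cast h
  · rw [Finset.mul_sum]
    apply Finset.sum_le_sum
    intro n hn
    rw [term_eq hVm]
    apply mul_le_mul_of_nonneg_left ?_ (div_nonneg (hκ n hn).le (zpow_pos hVm _).le)
    have h := hup n hn
    calc (Nat.descFactorial j n : ℝ) ≤ ((i ^ n : ℕ) : ℝ) := by exact_mod_cast h
      _ = ((i:ℝ)) ^ n := by push_cast; ring

lemma log_bounds {Vm s Pl Ph : ℝ} (hVm : 0 < Vm) (hPl : 0 < Pl)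
    (hlow : Vm * Pl ≤ s) (hup : s ≤ Vm * Ph) :
    Real.log Vm + Real.log Pl ≤ Real.log s ∧
      Real.log s ≤ Real.log Vm + Real.log Ph := by
  have hs : 0 < s := lt_of_lt_of_le (mul_pos hVm hPl) hlow
  have hPh : 0 < Ph := by nlinarith
  constructor
  · rw [← Real.log_mul hVm.ne' hPl.ne']
    exact Real.log_le_log (mul_pos hVm hPl) hlow
  · rw [← Real.log_mul hVm.ne' hPh.ne']
    exact Real.log_le_log hs hup

lemma sum_shift (g : ℕ → ℝ) (K A b : ℕ) (hKA : K + 1 ≤ A) :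
    ∑ i ∈ Finset.Icc A b, g (i - K) = ∑ j ∈ Finset.Icc (A - K) (b - K), g j := by
  apply Finset.sum_nbij' (fun i => i - K) (fun j => j + K)
  · intro a ha
    rw [Finset.mem_Icc] at ha ⊢
    omega
  · intro a ha
    rw [Finset.mem_Icc] at ha ⊢
    omega
  · intro a ha
    rw [Finset.mem_Icc] at ha
    omega
  · intro a ha
    omega
  · intro a _
    rfl


end Stmt9Aux3
end Stmt9Prelims

open Stmt9Aux Stmt9Aux2 Stmt9Aux3 MeasureTheory Set in
/-- Riemann-sum convergence: the scaled sum of log birth/death ratios of the `V`-scaled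
one-species mass-action birth-death chain converges to
`−∫₀^x̃ ln((Σ_{n≥0} κ_n u^{ν_n})/(Σ_{n<0} κ_n u^{ν_n})) du`. -/
theorem stmt_9 (U D : Finset ℕ) (hU : U.Nonempty) (hD : D.Nonempty)
    (hD1 : ∀ n ∈ D, 1 ≤ n)
    (κu κd : ℕ → ℝ) (hκu : ∀ n ∈ U, 0 < κu n) (hκd : ∀ n ∈ D, 0 < κd n)
    (i₀ : ℕ)
    (V : ℕ → ℝ) (hV : Tendsto V atTop atTop) (hVpos : ∀ m, 0 < V m)
    (p q : ℕ → ℕ → ℝ)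
    (hp : ∀ m i, p m i =
      ∑ n ∈ U, κu n / V m ^ ((n : ℤ) - 1) * (Nat.descFactorial i n : ℝ))
    (hq : ∀ m i, q m i =
      ∑ n ∈ D, κd n / V m ^ ((n : ℤ) - 1) * (Nat.descFactorial i n : ℝ))
    (x : ℕ → ℕ) (xt : ℝ) (hxt : 0 < xt)
    (hx : Tendsto (fun m => (x m : ℝ) / V m) atTop (nhds xt)) :
    Tendsto
      (fun m => -(1 / V m) *
        ∑ i ∈ Finset.Icc (i₀ + 1) (x m), (Real.log (p m (i - 1)) - Real.log (q m i)))
      atTop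
      (nhds (-(∫ u in (0 : ℝ)..xt,
        Real.log ((∑ n ∈ U, κu n * u ^ n) / (∑ n ∈ D, κd n * u ^ n))))) := by
  classical
  set K : ℕ := (U ∪ D).sup id with hK
  have hKU : ∀ n ∈ U, n ≤ K := fun n hn => Finset.le_sup (f := id) (Finset.mem_union_left _ hn)
  have hKD : ∀ n ∈ D, n ≤ K := fun n hn => Finset.le_sup (f := id) (Finset.mem_union_right _ hn)
  set A : ℕ := max (i₀ + 1) (K + 1) with hA
  have hAK : K + 1 ≤ A := le_max_right _ _
  have hAi : i₀ + 1 ≤ A := le_max_left _ _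
  have hA1 : 1 ≤ A := le_trans (by omega) hAi
  set P : ℝ → ℝ := fun u => ∑ n ∈ U, κu n * u ^ n with hPdef
  set Q : ℝ → ℝ := fun u => ∑ n ∈ D, κd n * u ^ n with hQdef
  have hPpos : ∀ u : ℝ, 0 < u → 0 < P u := fun u hu => sum_pow_pos U hU κu hκu hu
  have hQpos : ∀ u : ℝ, 0 < u → 0 < Q u := fun u hu => sum_pow_pos D hD κd hκd hu
  have hPmono : ∀ u v : ℝ, 0 < u → u ≤ v → P u ≤ P v := fun u v hu huv =>
    Finset.sum_le_sum fun n hn =>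
      mul_le_mul_of_nonneg_left (pow_le_pow_left₀ hu.le huv n) (hκu n hn).le
  have hQmono : ∀ u v : ℝ, 0 < u → u ≤ v → Q u ≤ Q v := fun u v hu huv =>
    Finset.sum_le_sum fun n hn =>
      mul_le_mul_of_nonneg_left (pow_le_pow_left₀ hu.le huv n) (hκd n hn).le
  have hfPmono : ∀ u v : ℝ, 0 < u → u ≤ v → Real.log (P u) ≤ Real.log (P v) :=
    fun u v hu huv => Real.log_le_log (hPpos u hu) (hPmono u v hu huv)
  have hfQmono : ∀ u v : ℝ, 0 < u → u ≤ v → Real.log (Q u) ≤ Real.log (Q v) :=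
    fun u v hu huv => Real.log_le_log (hQpos u hu) (hQmono u v hu huv)
  have hfPint : IntervalIntegrable (fun u => Real.log (P u)) volume 0 (xt + 1) :=
    log_sum_pow_integrable U hU κu hκu (by linarith)
  have hfQint : IntervalIntegrable (fun u => Real.log (Q u)) volume 0 (xt + 1) :=
    log_sum_pow_integrable D hD κd hκd (by linarith)
  set IP : ℝ := ∫ u in (0:ℝ)..xt, Real.log (P u) with hIP
  set IQ : ℝ := ∫ u in (0:ℝ)..xt, Real.log (Q u) with hIQ
  -- the target integral equals IP - IQ
  have hmemxt : ∀ y : ℝ, 0 ≤ y → y ≤ xt → y ∈ Set.uIcc (0:ℝ) (xt+1) := by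
    intro y h1 h2
    rw [Set.uIcc_of_le (by linarith)]
    exact ⟨h1, by linarith⟩
  have hfPint' : IntervalIntegrable (fun u => Real.log (P u)) volume 0 xt :=
    hfPint.mono_set (Set.uIcc_subset_uIcc (hmemxt 0 le_rfl hxt.le) (hmemxt xt hxt.le le_rfl))
  have hfQint' : IntervalIntegrable (fun u => Real.log (Q u)) volume 0 xt :=
    hfQint.mono_set (Set.uIcc_subset_uIcc (hmemxt 0 le_rfl hxt.le) (hmemxt xt hxt.le le_rfl))
  have htarget : (∫ u in (0:ℝ)..xt,
      Real.log ((∑ n ∈ U, κu n * u ^ n) / (∑ n ∈ D, κd n * u ^ n))) = IP - IQ := by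
    rw [hIP, hIQ, ← intervalIntegral.integral_sub hfPint' hfQint']
    apply intervalIntegral.integral_congr_ae
    refine MeasureTheory.ae_of_all _ fun u hu => ?_
    rw [Set.uIoc_of_le hxt.le] at hu
    exact Real.log_div (hPpos u hu.1).ne' (hQpos u hu.1).ne'
  -- Riemann sums
  have hR1 : Tendsto (fun m => (1 / V m) * ∑ i ∈ Finset.Icc A (x m),
      Real.log (P ((i : ℝ) / V m))) atTop (nhds IP) :=
    riemann_mono _ xt hxt hfPmono hfPint A hA1 V hV hVpos x hx
  have hR2 : Tendsto (fun m => (1 / V m) * ∑ i ∈ Finset.Icc A (x m),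
      Real.log (Q ((i : ℝ) / V m))) atTop (nhds IQ) :=
    riemann_mono _ xt hxt hfQmono hfQint A hA1 V hV hVpos x hx
  have hxtop : Tendsto (fun m => (x m : ℝ)) atTop atTop := cast_atTop hV hxt hx
  have hxK : ∀ᶠ m in atTop, K ≤ x m :=
    (hxtop.eventually_ge_atTop (K : ℝ)).mono fun m hm => by exact_mod_cast hm
  have hxA : ∀ᶠ m in atTop, A ≤ x m :=
    (hxtop.eventually_ge_atTop (A : ℝ)).mono fun m hm => by exact_mod_cast hm
  have hcdiv : ∀ c : ℝ, Tendsto (fun m => c / V m) atTop (nhds 0) :=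
    fun c => Tendsto.div_atTop tendsto_const_nhds hV
  have hbK : Tendsto (fun m => ((x m - K : ℕ) : ℝ) / V m) atTop (nhds xt) := by
    have h := hx.sub (hcdiv (K : ℝ))
    rw [sub_zero] at h
    refine Tendsto.congr' ?_ h
    filter_upwards [hxK] with m hm
    rw [Nat.cast_sub hm, sub_div]
  have hR1s : Tendsto (fun m => (1 / V m) * ∑ j ∈ Finset.Icc (A - K) (x m - K),
      Real.log (P ((j : ℝ) / V m))) atTop (nhds IP) :=
    riemann_mono _ xt hxt hfPmono hfPint (A - K) (by omega) V hV hVpos (fun m => x m - K) hbK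
  have hR2s : Tendsto (fun m => (1 / V m) * ∑ j ∈ Finset.Icc (A - K) (x m - K),
      Real.log (Q ((j : ℝ) / V m))) atTop (nhds IQ) :=
    riemann_mono _ xt hxt hfQmono hfQint (A - K) (by omega) V hV hVpos (fun m => x m - K) hbK
  -- pointwise bounds for i ≥ A
  have hbound : ∀ m : ℕ, ∀ i : ℕ, A ≤ i →
      (Real.log (P (((i - K : ℕ) : ℝ) / V m)) - Real.log (Q ((i : ℝ) / V m))
        ≤ Real.log (p m (i - 1)) - Real.log (q m i)
      ∧ Real.log (p m (i - 1)) - Real.log (q m i)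
        ≤ Real.log (P ((i : ℝ) / V m)) - Real.log (Q (((i - K : ℕ) : ℝ) / V m))) := by
    intro m i hi
    have hv0 := hVpos m
    have hiK : K + 1 ≤ i := le_trans hAK hi
    have hcpos : (0:ℝ) < ((i - K : ℕ) : ℝ) := by
      have h1 : 0 < i - K := by omega
      exact_mod_cast h1
    have hPl : 0 < P (((i - K : ℕ) : ℝ) / V m) := hPpos _ (div_pos hcpos hv0)
    have hQl : 0 < Q (((i - K : ℕ) : ℝ) / V m) := hQpos _ (div_pos hcpos hv0)
    have hpb := sum_bounds U κu hκu hv0 (i - K) i (i - 1)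
      (fun n hn => dF_low_p (hKU n hn) hiK)
      (fun n hn => dF_up_p i n)
    have hqb := sum_bounds D κd hκd hv0 (i - K) i i
      (fun n hn => dF_low_q (hKD n hn))
      (fun n hn => dF_up_q i n)
    have hpb1 : V m * P (((i - K : ℕ) : ℝ) / V m)
        ≤ ∑ n ∈ U, κu n / V m ^ ((n:ℤ) - 1) * (Nat.descFactorial (i-1) n : ℝ) := hpb.1
    have hpb2 : (∑ n ∈ U, κu n / V m ^ ((n:ℤ) - 1) * (Nat.descFactorial (i-1) n : ℝ))
        ≤ V m * P ((i : ℝ) / V m) := hpb.2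
    have hqb1 : V m * Q (((i - K : ℕ) : ℝ) / V m)
        ≤ ∑ n ∈ D, κd n / V m ^ ((n:ℤ) - 1) * (Nat.descFactorial i n : ℝ) := hqb.1
    have hqb2 : (∑ n ∈ D, κd n / V m ^ ((n:ℤ) - 1) * (Nat.descFactorial i n : ℝ))
        ≤ V m * Q ((i : ℝ) / V m) := hqb.2
    have hPlog := log_bounds hv0 hPl hpb1 hpb2
    have hQlog := log_bounds hv0 hQl hqb1 hqb2
    rw [hp m (i-1), hq m i]
    constructor
    · linarith [hPlog.1, hQlog.2]
    · linarith [hPlog.2, hQlog.1]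
  -- middle part
  have hshiftP : ∀ m : ℕ, ∑ i ∈ Finset.Icc A (x m), Real.log (P (((i - K : ℕ) : ℝ) / V m))
      = ∑ j ∈ Finset.Icc (A - K) (x m - K), Real.log (P ((j : ℝ) / V m)) := fun m =>
    sum_shift (fun j => Real.log (P ((j : ℝ) / V m))) K A (x m) hAK
  have hshiftQ : ∀ m : ℕ, ∑ i ∈ Finset.Icc A (x m), Real.log (Q (((i - K : ℕ) : ℝ) / V m))
      = ∑ j ∈ Finset.Icc (A - K) (x m - K), Real.log (Q ((j : ℝ) / V m)) := fun m =>
    sum_shift (fun j => Real.log (Q ((j : ℝ) / V m))) K A (x m) hAK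
  have hLow : Tendsto (fun m => (1 / V m) * ∑ i ∈ Finset.Icc A (x m),
      (Real.log (P (((i - K : ℕ) : ℝ) / V m)) - Real.log (Q ((i : ℝ) / V m))))
      atTop (nhds (IP - IQ)) := by
    refine Tendsto.congr (fun m => ?_) (hR1s.sub hR2)
    rw [Finset.sum_sub_distrib, mul_sub, hshiftP m]
  have hUp : Tendsto (fun m => (1 / V m) * ∑ i ∈ Finset.Icc A (x m),
      (Real.log (P ((i : ℝ) / V m)) - Real.log (Q (((i - K : ℕ) : ℝ) / V m))))
      atTop (nhds (IP - IQ)) := by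
    refine Tendsto.congr (fun m => ?_) (hR1.sub hR2s)
    rw [Finset.sum_sub_distrib, mul_sub, hshiftQ m]
  have hmid : Tendsto (fun m => (1 / V m) * ∑ i ∈ Finset.Icc A (x m),
      (Real.log (p m (i - 1)) - Real.log (q m i))) atTop (nhds (IP - IQ)) := by
    refine tendsto_of_tendsto_of_tendsto_of_le_of_le' hLow hUp ?_ ?_
    · refine Filter.Eventually.of_forall fun m => ?_
      refine mul_le_mul_of_nonneg_left ?_ (one_div_nonneg.2 (hVpos m).le)
      exact Finset.sum_le_sum fun i hi => (hbound m i (Finset.mem_Icc.1 hi).1).1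
    · refine Filter.Eventually.of_forall fun m => ?_
      refine mul_le_mul_of_nonneg_left ?_ (one_div_nonneg.2 (hVpos m).le)
      exact Finset.sum_le_sum fun i hi => (hbound m i (Finset.mem_Icc.1 hi).1).2
  -- edge part
  have hedge : Tendsto (fun m => (1 / V m) * ∑ i ∈ Finset.Ioc i₀ (A - 1),
      (Real.log (p m (i - 1)) - Real.log (q m i))) atTop (nhds 0) := by
    have hterm : ∀ i : ℕ, Tendsto (fun m => (1 / V m) *
        (Real.log (p m (i - 1)) - Real.log (q m i))) atTop (nhds 0) := by
      intro i
      have h1 := Stmt9Aux2.edge U hU κu hκu (i - 1) V hV hVpos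
      have h2 := Stmt9Aux2.edge D hD κd hκd i V hV hVpos
      have h3 := h1.sub h2
      rw [sub_zero] at h3
      exact h3.congr fun m => by rw [hp m (i-1), hq m i]; ring
    have h4 : Tendsto (fun m => ∑ i ∈ Finset.Ioc i₀ (A - 1), (1 / V m) *
        (Real.log (p m (i - 1)) - Real.log (q m i))) atTop (nhds 0) := by
      have h5 := tendsto_finset_sum (Finset.Ioc i₀ (A - 1))
        (fun i _ => hterm i)
      simpa using h5
    exact h4.congr fun m => (Finset.mul_sum _ _ _).symm
  -- combine
  have hfull := hedge.add hmid
  rw [zero_add] at hfull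
  have hfinal := hfull.neg
  rw [htarget]
  refine Tendsto.congr' ?_ hfinal
  filter_upwards [hxA] with m hm
  have hIoc : Finset.Icc A (x m) = Finset.Ioc (A - 1) (x m) := by
    rw [← Finset.Icc_add_one_left_eq_Ioc]
    congr 1
    omega
  have hsplit : ∑ i ∈ Finset.Icc (i₀ + 1) (x m),
      (Real.log (p m (i - 1)) - Real.log (q m i))
      = (∑ i ∈ Finset.Ioc i₀ (A - 1), (Real.log (p m (i - 1)) - Real.log (q m i)))
        + ∑ i ∈ Finset.Icc A (x m), (Real.log (p m (i - 1)) - Real.log (q m i)) := by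
    rw [Finset.Icc_add_one_left_eq_Ioc, hIoc]
    rw [Finset.sum_Ioc_consecutive _ (by omega : i₀ ≤ A - 1) (by omega : A - 1 ≤ x m)]
  rw [hsplit]
  ring
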